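/- arXiv:1008.2377 — 6 statements merged into one kernel-verified Lean document; each statement's English description precedes it below -/
import Mathlib

section
/- Let d and b_1,...,b_8 be integers with b_i ≥ -1, such that d^2 = (∑_{i=1}^8 b_i^2) - 1 and 3d = (∑_{i=1}^8 b_i) + 1 (the numerical conditions for a (-1)-class on the blow-up of P^2 at 8 points). If d ≥ 1 then d ≤ 6. -/
/-- Numerical classification step for (-1)-classes on the blow-up of P^2 at 8 points:
if `d^2 = (∑ b_i^2) - 1` and `3d = (∑ b_i) + 1` with `b_i ≥ -1` and `d ≥ 1`, then `d ≤ 6`. -/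
theorem stmt_0 (d : ℤ) (b : Fin 8 → ℤ) (hb : ∀ i, -1 ≤ b i)
    (h1 : d ^ 2 = (∑ i, (b i) ^ 2) - 1) (h2 : 3 * d = (∑ i, b i) + 1)
    (hd : 1 ≤ d) : d ≤ 6 := by
  by_contra hcon
  push_neg at hcon
  have hcs : (∑ i, b i) ^ 2 ≤ (8:ℤ) * ∑ i, (b i) ^ 2 := by
    have := sq_sum_le_card_mul_sum_sq (s := (Finset.univ : Finset (Fin 8))) (f := b)
    simpa using this
  have hle : d ≤ 7 := by nlinarith [hcs]
  have hd7 : d = 7 := by omega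
  subst hd7
  have hodd : ∀ i : Fin 8, 1 ≤ (2 * b i - 5) ^ 2 := by
    intro i
    have h0 : 2 * b i - 5 ≠ 0 := by omega
    have ha : 1 ≤ |2 * b i - 5| := Int.one_le_abs h0
    calc (1:ℤ) = 1 * 1 := by ring
    _ ≤ |2 * b i - 5| * |2 * b i - 5| := mul_le_mul ha ha (by norm_num) (abs_nonneg _)
    _ = (2 * b i - 5) ^ 2 := by rw [← sq_abs]; ring
  simp only [Fin.sum_univ_eight] at h1 h2
  nlinarith [hodd 0, hodd 1, hodd 2, hodd 3, hodd 4, hodd 5, hodd 6, hodd 7]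
end

section
/- Let d and b_1,...,b_8 be nonnegative integers with d ≥ 1, d^2 = (∑_{i=1}^8 b_i^2) - 1 and 3d = (∑_{i=1}^8 b_i) + 1. Then, up to permutation of the b_i, the tuple (d; b_1,...,b_8) is one of: (1; 0,0,0,0,0,0,1,1), (2; 0,0,0,1,1,1,1,1), (3; 0,1,1,1,1,1,1,2), (4; 1,1,1,1,1,2,2,2), (5; 1,1,2,2,2,2,2,2), (6; 2,2,2,2,2,2,2,3). -/
section helpers

lemma perm_of_multiset_eq' {n : ℕ} (b v : Fin n → ℕ)
    (h : Multiset.map b Finset.univ.val = Multiset.map v Finset.univ.val) :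
    ∃ σ : Equiv.Perm (Fin n), b ∘ σ = v := by
  classical
  have key : ∀ f : Fin n → ℕ, Multiset.map (f ∘ Tuple.sort f) Finset.univ.val
      = Multiset.map f Finset.univ.val := by
    intro f
    have h3 : Multiset.map (⇑(Tuple.sort f)) Finset.univ.val = Finset.univ.val := by
      have h2 := Finset.map_univ_equiv (Tuple.sort f)
      calc Multiset.map (⇑(Tuple.sort f)) Finset.univ.val
          = (Finset.univ.map (Tuple.sort f).toEmbedding).val := rfl
        _ = Finset.univ.val := by rw [h2]
    rw [← Multiset.map_map, h3]
  have hcoe : ∀ f : Fin n → ℕ,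
      (↑(List.ofFn f) : Multiset ℕ) = Multiset.map f Finset.univ.val := by
    intro f
    rw [List.ofFn_eq_map, Fin.univ_def]
    rfl
  have hperm : List.Perm (List.ofFn (b ∘ Tuple.sort b)) (List.ofFn (v ∘ Tuple.sort v)) := by
    rw [← Multiset.coe_eq_coe, hcoe, hcoe, key, key, h]
  have hlist : List.ofFn (b ∘ Tuple.sort b) = List.ofFn (v ∘ Tuple.sort v) :=
    List.Perm.eq_of_sortedLE
      (List.sortedLE_ofFn_iff.2 (Tuple.monotone_sort b))
      (List.sortedLE_ofFn_iff.2 (Tuple.monotone_sort v)) hperm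
  have hfun : b ∘ Tuple.sort b = v ∘ Tuple.sort v := List.ofFn_injective hlist
  refine ⟨(Tuple.sort v).symm.trans (Tuple.sort b), ?_⟩
  funext i
  have := congrFun hfun ((Tuple.sort v).symm i)
  simpa using this

lemma multiset_eq_of_count' (f g : Fin 8 → ℕ) (hf : ∀ i, f i < 8) (hg : ∀ i, g i < 8)
    (h : ∀ a < 8, Multiset.count a (Multiset.map f Finset.univ.val)
        = Multiset.count a (Multiset.map g Finset.univ.val)) :
    Multiset.map f Finset.univ.val = Multiset.map g Finset.univ.val := by
  ext a
  by_cases ha : a < 8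
  · exact h a ha
  · rw [Multiset.count_eq_zero_of_notMem, Multiset.count_eq_zero_of_notMem] <;>
    · simp only [Multiset.mem_map]
      rintro ⟨i, -, rfl⟩
      first
        | exact ha (hg i)
        | exact ha (hf i)

set_option maxHeartbeats 1000000 in
lemma cnt1' (c0 c1 c2 c3 c4 c5 c6 c7 : ℕ)
    (hA : c0 + c1 + c2 + c3 + c4 + c5 + c6 + c7 = 8)
    (hB : c1 + c2*2 + c3*3 + c4*4 + c5*5 + c6*6 + c7*7 = 2)
    (hC : c1 + c2*4 + c3*9 + c4*16 + c5*25 + c6*36 + c7*49 = 2) :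
    c0 = 6 ∧ c1 = 2 ∧ c2 = 0 ∧ c3 = 0 ∧ c4 = 0 ∧ c5 = 0 ∧ c6 = 0 ∧ c7 = 0 := by omega

set_option maxHeartbeats 1000000 in
lemma cnt2' (c0 c1 c2 c3 c4 c5 c6 c7 : ℕ)
    (hA : c0 + c1 + c2 + c3 + c4 + c5 + c6 + c7 = 8)
    (hB : c1 + c2*2 + c3*3 + c4*4 + c5*5 + c6*6 + c7*7 = 5)
    (hC : c1 + c2*4 + c3*9 + c4*16 + c5*25 + c6*36 + c7*49 = 5) :
    c0 = 3 ∧ c1 = 5 ∧ c2 = 0 ∧ c3 = 0 ∧ c4 = 0 ∧ c5 = 0 ∧ c6 = 0 ∧ c7 = 0 := by omega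

set_option maxHeartbeats 1000000 in
lemma cnt3' (c0 c1 c2 c3 c4 c5 c6 c7 : ℕ)
    (hA : c0 + c1 + c2 + c3 + c4 + c5 + c6 + c7 = 8)
    (hB : c1 + c2*2 + c3*3 + c4*4 + c5*5 + c6*6 + c7*7 = 8)
    (hC : c1 + c2*4 + c3*9 + c4*16 + c5*25 + c6*36 + c7*49 = 10) :
    c0 = 1 ∧ c1 = 6 ∧ c2 = 1 ∧ c3 = 0 ∧ c4 = 0 ∧ c5 = 0 ∧ c6 = 0 ∧ c7 = 0 := by
  have hz : c4 = 0 ∧ c5 = 0 ∧ c6 = 0 ∧ c7 = 0 := by omega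
  obtain ⟨z4, z5, z6, z7⟩ := hz
  subst z4 z5 z6 z7
  omega

set_option maxHeartbeats 1000000 in
lemma cnt4' (c0 c1 c2 c3 c4 c5 c6 c7 : ℕ)
    (hA : c0 + c1 + c2 + c3 + c4 + c5 + c6 + c7 = 8)
    (hB : c1 + c2*2 + c3*3 + c4*4 + c5*5 + c6*6 + c7*7 = 11)
    (hC : c1 + c2*4 + c3*9 + c4*16 + c5*25 + c6*36 + c7*49 = 17) :
    c0 = 0 ∧ c1 = 5 ∧ c2 = 3 ∧ c3 = 0 ∧ c4 = 0 ∧ c5 = 0 ∧ c6 = 0 ∧ c7 = 0 := by omega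

set_option maxHeartbeats 1000000 in
lemma cnt5' (c0 c1 c2 c3 c4 c5 c6 c7 : ℕ)
    (hA : c0 + c1 + c2 + c3 + c4 + c5 + c6 + c7 = 8)
    (hB : c1 + c2*2 + c3*3 + c4*4 + c5*5 + c6*6 + c7*7 = 14)
    (hC : c1 + c2*4 + c3*9 + c4*16 + c5*25 + c6*36 + c7*49 = 26) :
    c0 = 0 ∧ c1 = 2 ∧ c2 = 6 ∧ c3 = 0 ∧ c4 = 0 ∧ c5 = 0 ∧ c6 = 0 ∧ c7 = 0 := by omega

set_option maxHeartbeats 1000000 in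
lemma cnt6' (c0 c1 c2 c3 c4 c5 c6 c7 : ℕ)
    (hA : c0 + c1 + c2 + c3 + c4 + c5 + c6 + c7 = 8)
    (hB : c1 + c2*2 + c3*3 + c4*4 + c5*5 + c6*6 + c7*7 = 17)
    (hC : c1 + c2*4 + c3*9 + c4*16 + c5*25 + c6*36 + c7*49 = 37) :
    c0 = 0 ∧ c1 = 0 ∧ c2 = 7 ∧ c3 = 1 ∧ c4 = 0 ∧ c5 = 0 ∧ c6 = 0 ∧ c7 = 0 := by omega

set_option maxHeartbeats 1000000 in
lemma cnt7' (c0 c1 c2 c3 c4 c5 c6 c7 : ℕ)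
    (hA : c0 + c1 + c2 + c3 + c4 + c5 + c6 + c7 = 8)
    (hB : c1 + c2*2 + c3*3 + c4*4 + c5*5 + c6*6 + c7*7 = 20)
    (hC : c1 + c2*4 + c3*9 + c4*16 + c5*25 + c6*36 + c7*49 = 50) : False := by omega

end helpers

set_option maxHeartbeats 1000000 in
/-- Complete numerical classification of (-1)-curve classes `dE_0 - ∑ b_i E_i`
on the blow-up of P^2 at 8 points with `d ≥ 1`. -/
theorem stmt_1 (d : ℕ) (b : Fin 8 → ℕ) (hd : 1 ≤ d)
    (h1 : d ^ 2 + 1 = ∑ i, (b i) ^ 2) (h2 : 3 * d = (∑ i, b i) + 1) :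
    ∃ σ : Equiv.Perm (Fin 8),
      (d = 1 ∧ b ∘ σ = ![0, 0, 0, 0, 0, 0, 1, 1]) ∨
      (d = 2 ∧ b ∘ σ = ![0, 0, 0, 1, 1, 1, 1, 1]) ∨
      (d = 3 ∧ b ∘ σ = ![0, 1, 1, 1, 1, 1, 1, 2]) ∨
      (d = 4 ∧ b ∘ σ = ![1, 1, 1, 1, 1, 2, 2, 2]) ∨
      (d = 5 ∧ b ∘ σ = ![1, 1, 2, 2, 2, 2, 2, 2]) ∨
      (d = 6 ∧ b ∘ σ = ![2, 2, 2, 2, 2, 2, 2, 3]) := by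
  classical
  have hble : ∀ i, b i ≤ d := by
    intro i
    have hle : b i ^ 2 ≤ d ^ 2 + 1 := by
      rw [h1]
      exact Finset.single_le_sum (f := fun i => b i ^ 2) (fun i _ => Nat.zero_le _)
        (Finset.mem_univ i)
    nlinarith
  have hd7 : d ≤ 7 := by
    have hcs := sq_sum_le_card_mul_sum_sq (s := (Finset.univ : Finset (Fin 8))) (f := b)
    simp only [Finset.card_univ, Fintype.card_fin] at hcs
    nlinarith [h1, h2, hcs]
  have hb8 : ∀ i, b i < 8 := fun i => lt_of_le_of_lt (hble i) (by omega)
  set c : ℕ → ℕ := fun j => (Finset.univ.filter (fun i => b i = j)).card with hc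
  have hA : ∑ j ∈ Finset.range 8, c j = 8 := by
    have := Finset.card_eq_sum_card_fiberwise
      (f := b) (s := (Finset.univ : Finset (Fin 8))) (t := Finset.range 8)
      (fun i _ => Finset.mem_range.2 (hb8 i))
    simpa using this.symm
  have hB : ∑ j ∈ Finset.range 8, c j * j = ∑ i, b i := by
    rw [← Finset.sum_fiberwise_of_maps_to (g := b) (fun i _ => Finset.mem_range.2 (hb8 i)) b]
    refine Finset.sum_congr rfl fun j hj => ?_
    rw [Finset.sum_congr rfl (fun x hx => (Finset.mem_filter.1 hx).2), Finset.sum_const,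
      smul_eq_mul]
  have hC : ∑ j ∈ Finset.range 8, c j * j ^ 2 = ∑ i, b i ^ 2 := by
    rw [← Finset.sum_fiberwise_of_maps_to (g := b) (fun i _ => Finset.mem_range.2 (hb8 i))
      (fun i => b i ^ 2)]
    refine Finset.sum_congr rfl fun j hj => ?_
    rw [Finset.sum_congr rfl (fun x hx => by rw [(Finset.mem_filter.1 hx).2]), Finset.sum_const,
      smul_eq_mul]
  rw [← hC] at h1
  rw [← hB] at h2
  simp only [Finset.sum_range_succ, Finset.sum_range_zero] at h1 h2 hA
  norm_num at h1 h2 hA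
  rw [pow_two] at h1
  have hcount : ∀ a, Multiset.count a (Multiset.map b Finset.univ.val) = c a := by
    intro a
    rw [Multiset.count_map]
    have : Multiset.filter (fun x => a = b x) Finset.univ.val
        = Multiset.filter (fun x => b x = a) Finset.univ.val :=
      Multiset.filter_congr (fun x _ => by constructor <;> (intro h; exact h.symm))
    rw [this]
    rfl
  -- a helper to finish each branch
  have finish : ∀ v : Fin 8 → ℕ, (∀ i, v i < 8) →
      (∀ a < 8, c a = Multiset.count a (Multiset.map v Finset.univ.val)) →
      ∃ σ : Equiv.Perm (Fin 8), b ∘ σ = v := by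
    intro v hv hcv
    apply perm_of_multiset_eq'
    apply multiset_eq_of_count' _ _ hb8 hv
    intro a ha
    rw [hcount a, hcv a ha]
  interval_cases d
  · obtain ⟨e0, e1, e2, e3, e4, e5, e6, e7⟩ :=
      cnt1' (c 0) (c 1) (c 2) (c 3) (c 4) (c 5) (c 6) (c 7) (by omega) (by omega) (by omega)
    obtain ⟨σ, hσ⟩ := finish ![0, 0, 0, 0, 0, 0, 1, 1] (by decide) (by
      intro a ha
      interval_cases a <;> simp only [e0, e1, e2, e3, e4, e5, e6, e7] <;> decide)
    exact ⟨σ, Or.inl ⟨rfl, hσ⟩⟩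
  · obtain ⟨e0, e1, e2, e3, e4, e5, e6, e7⟩ :=
      cnt2' (c 0) (c 1) (c 2) (c 3) (c 4) (c 5) (c 6) (c 7) (by omega) (by omega) (by omega)
    obtain ⟨σ, hσ⟩ := finish ![0, 0, 0, 1, 1, 1, 1, 1] (by decide) (by
      intro a ha
      interval_cases a <;> simp only [e0, e1, e2, e3, e4, e5, e6, e7] <;> decide)
    exact ⟨σ, Or.inr (Or.inl ⟨rfl, hσ⟩)⟩
  · obtain ⟨e0, e1, e2, e3, e4, e5, e6, e7⟩ :=
      cnt3' (c 0) (c 1) (c 2) (c 3) (c 4) (c 5) (c 6) (c 7) (by omega) (by omega) (by omega)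
    obtain ⟨σ, hσ⟩ := finish ![0, 1, 1, 1, 1, 1, 1, 2] (by decide) (by
      intro a ha
      interval_cases a <;> simp only [e0, e1, e2, e3, e4, e5, e6, e7] <;> decide)
    exact ⟨σ, Or.inr (Or.inr (Or.inl ⟨rfl, hσ⟩))⟩
  · obtain ⟨e0, e1, e2, e3, e4, e5, e6, e7⟩ :=
      cnt4' (c 0) (c 1) (c 2) (c 3) (c 4) (c 5) (c 6) (c 7) (by omega) (by omega) (by omega)
    obtain ⟨σ, hσ⟩ := finish ![1, 1, 1, 1, 1, 2, 2, 2] (by decide) (by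
      intro a ha
      interval_cases a <;> simp only [e0, e1, e2, e3, e4, e5, e6, e7] <;> decide)
    exact ⟨σ, Or.inr (Or.inr (Or.inr (Or.inl ⟨rfl, hσ⟩)))⟩
  · obtain ⟨e0, e1, e2, e3, e4, e5, e6, e7⟩ :=
      cnt5' (c 0) (c 1) (c 2) (c 3) (c 4) (c 5) (c 6) (c 7) (by omega) (by omega) (by omega)
    obtain ⟨σ, hσ⟩ := finish ![1, 1, 2, 2, 2, 2, 2, 2] (by decide) (by
      intro a ha
      interval_cases a <;> simp only [e0, e1, e2, e3, e4, e5, e6, e7] <;> decide)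
    exact ⟨σ, Or.inr (Or.inr (Or.inr (Or.inr (Or.inl ⟨rfl, hσ⟩))))⟩
  · obtain ⟨e0, e1, e2, e3, e4, e5, e6, e7⟩ :=
      cnt6' (c 0) (c 1) (c 2) (c 3) (c 4) (c 5) (c 6) (c 7) (by omega) (by omega) (by omega)
    obtain ⟨σ, hσ⟩ := finish ![2, 2, 2, 2, 2, 2, 2, 3] (by decide) (by
      intro a ha
      interval_cases a <;> simp only [e0, e1, e2, e3, e4, e5, e6, e7] <;> decide)
    exact ⟨σ, Or.inr (Or.inr (Or.inr (Or.inr (Or.inr ⟨rfl, hσ⟩))))⟩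
  · exact (cnt7' (c 0) (c 1) (c 2) (c 3) (c 4) (c 5) (c 6) (c 7)
      (by omega) (by omega) (by omega)).elim
end

section
/- For every integer t ≥ 6, with m = ⌈5t/3⌉ - 1, the inequality C(m+3, 3) - 5·C(m-t+3, 3) ≥ C(m+2, 3) - 5·C(m-t+2, 3) holds, where C(n,k) denotes the binomial coefficient. -/
lemma c2_aux (n : ℕ) : 2 * (n + 2).choose 2 = (n + 2) * (n + 1) := by
  induction n with
  | zero => decide
  | succ k ih =>
    have h : (k + 1 + 2).choose 2 = (k + 2).choose 1 + (k + 2).choose 2 :=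
      Nat.choose_succ_succ (k + 2) 1
    rw [h, Nat.choose_one_right, Nat.mul_add, ih]
    ring

/-- For `t ≥ 6` and `m = ⌈5t/3⌉ - 1`,
`C(m+3,3) - 5·C(m-t+3,3) ≥ C(m+2,3) - 5·C(m-t+2,3)`. -/
theorem stmt_3 (t : ℕ) (ht : 6 ≤ t) (m : ℕ) (hm : m = (5 * t + 2) / 3 - 1) :
    ((m + 3).choose 3 : ℤ) - 5 * ((m - t + 3).choose 3) ≥
      ((m + 2).choose 3 : ℤ) - 5 * ((m - t + 2).choose 3) := by
  set s := m - t with hs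
  have hA : (m + 3).choose 3 = (m + 2).choose 2 + (m + 2).choose 3 :=
    Nat.choose_succ_succ (m + 2) 2
  have hB : (s + 3).choose 3 = (s + 2).choose 2 + (s + 2).choose 3 :=
    Nat.choose_succ_succ (s + 2) 2
  have key : 5 * ((s + 2).choose 2) ≤ (m + 2).choose 2 := by
    have hkey2 : 5 * ((s + 2) * (s + 1)) ≤ (m + 2) * (m + 1) := by
      obtain ⟨k, hk⟩ : ∃ k, t = 3 * k ∨ t = 3 * k + 1 ∨ t = 3 * k + 2 := ⟨t / 3, by omega⟩
      rcases hk with h | h | h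
      · have hm' : m = 5 * k - 1 ∧ s = 2 * k - 1 ∧ 2 ≤ k := by omega
        obtain ⟨h1, h2, h3⟩ := hm'
        rw [h1, h2]
        have : 5 * k - 1 + 2 = 5 * k + 1 := by omega
        rw [this]
        have : 5 * k - 1 + 1 = 5 * k := by omega
        rw [this]
        have : 2 * k - 1 + 2 = 2 * k + 1 := by omega
        rw [this]
        have : 2 * k - 1 + 1 = 2 * k := by omega
        rw [this]
        nlinarith
      · have h1 : m = 5 * k + 1 := by omega
        have h2 : s = 2 * k := by omega
        have h3 : 2 ≤ k := by omega
        rw [h1, h2]; nlinarith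
      · have h1 : m = 5 * k + 3 := by omega
        have h2 : s = 2 * k + 1 := by omega
        have h3 : 2 ≤ k := by omega
        rw [h1, h2]; nlinarith
    have e1 := c2_aux s
    have e2 := c2_aux m
    omega
  rw [hA, hB]
  push_cast
  have : ((s + 2).choose 2 : ℤ) * 5 ≤ (m + 2).choose 2 := by exact_mod_cast by linarith [key]
  linarith
end

section
/- For every integer k ≥ 2, the quantity α = ∑_{j=0}^{k-1} (-1)^{j+1} (k-j)^{2k-2} · C(2k+1, j) is positive. -/
open Finset

/-- Eulerian numbers. -/
def eul : ℕ → ℕ → ℕ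
  | 0, 0 => 1
  | 0, _+1 => 0
  | n+1, 0 => eul n 0
  | n+1, m+1 => (m+2) * eul n (m+1) + (n-m) * eul n m

@[simp] lemma eul_zero : ∀ n, eul n 0 = 1
  | 0 => rfl
  | n+1 => by rw [eul]; exact eul_zero n

lemma eul_eq_zero : ∀ n m, 1 ≤ n → n ≤ m → eul n m = 0
  | 0, _, h, _ => absurd h (by omega)
  | 1, m, _, h => by
      match m, h with
      | m+1, _ =>
        rw [eul]
        rcases Nat.eq_zero_or_pos m with rfl | hm
        · rfl
        · match m, hm with
          | m+1, _ => show (m+3) * eul 0 (m+2) + (0 - (m+1)) * eul 0 (m+1) = 0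
                      rw [show eul 0 (m+2) = 0 from rfl, show eul 0 (m+1) = 0 from rfl]; ring
  | n+2, m, _, h => by
      match m, h with
      | m+1, h =>
        rw [eul, eul_eq_zero (n+1) (m+1) (by omega) (by omega),
          show n + 1 - m = 0 by omega]
        ring

lemma eul_symm : ∀ n a b, a + b + 1 = n → eul n a = eul n b := by
  intro n
  induction n with
  | zero => omega
  | succ n ih =>
    have key : ∀ a b, a + b + 1 = n + 1 → a = 0 → eul (n+1) a = eul (n+1) b := by
      intro a b h ha
      subst ha
      rw [show b = n by omega]
      rcases Nat.eq_zero_or_pos n with rfl | hn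
      · rfl
      · match n, hn, ih with
        | m+1, _, ih =>
          have h1 : eul (m+1+1) (m+1) = (m+2) * eul (m+1) (m+1) + (m+1-m) * eul (m+1) m :=
            rfl
          rw [h1, eul_eq_zero (m+1) (m+1) (by omega) le_rfl, show m+1-m = 1 by omega,
            ih m 0 (by omega)]
          simp [eul_zero]
    intro a b h
    match a, b with
    | 0, b => exact key 0 b h rfl
    | a+1, 0 => exact (key 0 (a+1) (by omega) rfl).symm
    | a+1, b+1 =>
      rw [eul, eul, ih (a+1) b (by omega), ih a (b+1) (by omega),
        show n - a = b + 2 by omega, show n - b = a + 2 by omega]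
      ring

lemma eul_lt : ∀ n m, 2*m+3 ≤ n → eul n m < eul n (m+1) := by
  intro n
  induction n with
  | zero => intro m h; omega
  | succ n ih =>
    intro m h
    match m with
    | 0 =>
      have h1 : eul (n+1) 1 = 2 * eul n 1 + (n-0) * eul n 0 := rfl
      rw [eul_zero, h1, eul_zero, show n - 0 = n by omega]
      have h2 : 2 ≤ n := by omega
      nlinarith [Nat.zero_le (eul n 1)]
    | m+1 =>
      have e1 : eul (n+1) (m+1) = (m+2) * eul n (m+1) + (n-m) * eul n m := rfl
      have e2 : eul (n+1) (m+1+1) = (m+3) * eul n (m+2) + (n-(m+1)) * eul n (m+1) := rfl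
      have hlt : eul n m < eul n (m+1) := ih m (by omega)
      have hle : eul n (m+1) ≤ eul n (m+2) := by
        rcases eq_or_lt_of_le (show 2*m+4 ≤ n by omega) with heq | hlt2
        · exact le_of_eq (eul_symm n (m+1) (m+2) (by omega))
        · exact le_of_lt (ih (m+1) (by omega))
      obtain ⟨t, rfl⟩ : ∃ t, n = m + t + 4 := ⟨n - m - 4, by omega⟩
      rw [e1, e2, show m + t + 4 - m = t + 4 by omega, show m + t + 4 - (m+1) = t+3 by omega]
      nlinarith [hlt, hle]

open Polynomial in
lemma fwdDiff_poly_eq_zero (n : ℕ) : ∀ p : Polynomial ℤ, p.natDegree ≤ n →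
    (fwdDiff (1:ℤ))^[n+1] (fun x : ℤ => p.eval x) = fun _ => 0 := by
  induction n with
  | zero =>
    intro p hp
    rw [Polynomial.eq_C_of_natDegree_le_zero hp]
    funext x
    simp [fwdDiff]
  | succ n ih =>
    intro p hp
    rw [Function.iterate_succ_apply]
    have hq : (fwdDiff (1:ℤ)) (fun x : ℤ => p.eval x)
        = fun x : ℤ => (p.comp (X + C 1) - p).eval x := by
      funext x; simp [fwdDiff]
    rw [hq]
    apply ih
    by_cases hp0 : p = 0
    · simp [hp0]
    have hXC : (X + C (1:ℤ)).natDegree = 1 := natDegree_X_add_C 1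
    have hlc : (p.comp (X + C 1)).leadingCoeff = p.leadingCoeff := by
      rw [leadingCoeff_comp (by rw [hXC]; exact one_ne_zero), leadingCoeff_X_add_C,
        one_pow, mul_one]
    have hco : p.comp (X + C 1) ≠ 0 := fun h => hp0 (leadingCoeff_eq_zero.mp
      (by rw [← hlc, h, leadingCoeff_zero]))
    have hnd : (p.comp (X + C 1)).natDegree = p.natDegree := by
      rw [natDegree_comp, hXC, mul_one]
    have hdeg : (p.comp (X + C 1)).degree = p.degree := by
      rw [degree_eq_natDegree hco, degree_eq_natDegree hp0, hnd]
    have hsub := Polynomial.degree_sub_lt hdeg hco hlc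
    by_cases hr : p.comp (X + C 1) - p = 0
    · rw [hr]; simp
    · have := Polynomial.natDegree_lt_natDegree hr hsub
      omega

def esum (n m : ℕ) : ℤ :=
  ∑ j ∈ range (m+1), (-1:ℤ)^j * ((n+1).choose j) * ((m : ℤ) + 1 - j)^n

lemma esum_zero (n : ℕ) : esum n 0 = 1 := by simp [esum]

lemma esum_eq_zero (n m : ℕ) (hn : 1 ≤ n) (h : n ≤ m) : esum n m = 0 := by
  have hz : (fwdDiff (1:ℤ))^[n+1] (fun x : ℤ => ((m:ℤ)+1-x)^n) = fun _ => 0 := by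
    have he : (fun x : ℤ => ((m:ℤ)+1-x)^n)
        = fun x : ℤ => ((Polynomial.C ((m:ℤ)+1) - Polynomial.X)^n).eval x := by
      funext x; simp
    rw [he]
    apply fwdDiff_poly_eq_zero
    calc ((Polynomial.C ((m:ℤ)+1) - Polynomial.X)^n).natDegree
        ≤ n * (Polynomial.C ((m:ℤ)+1) - Polynomial.X).natDegree :=
          Polynomial.natDegree_pow_le
      _ ≤ n * 1 := Nat.mul_le_mul_left n (le_trans (Polynomial.natDegree_sub_le _ _)
          (by simp only [Polynomial.natDegree_C, Polynomial.natDegree_X]; omega))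
      _ = n := mul_one n
  have hf := fwdDiff_iter_eq_sum_shift (1:ℤ) (fun x : ℤ => ((m:ℤ)+1-x)^n) (n+1) 0
  rw [hz] at hf
  have hS : ∑ j ∈ range (n+2), (-1:ℤ)^j * ((n+1).choose j) * ((m:ℤ)+1-j)^n = 0 := by
    have : ∑ j ∈ range (n+2), (-1:ℤ)^j * ((n+1).choose j) * ((m:ℤ)+1-j)^n
        = (-1:ℤ)^(n+1) * ∑ k ∈ range (n+1+1),
            ((-1:ℤ)^(n+1-k) * ((n+1).choose k)) • (((m:ℤ)+1-(0 + k • (1:ℤ)))^n) := by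
      rw [Finset.mul_sum]
      apply Finset.sum_congr rfl
      intro k hk
      have hk2 : k ≤ n + 1 := by simpa using Nat.lt_succ_iff.mp (Finset.mem_range.mp hk)
      have hpow : (-1:ℤ)^k = (-1:ℤ)^(n+1) * (-1:ℤ)^(n+1-k) := by
        rw [← pow_add, show (n+1)+(n+1-k) = k + 2*(n+1-k) by omega, pow_add, pow_mul]
        simp
      rw [smul_eq_mul]
      rw [hpow]
      ring
    rw [this, ← hf]
    simp
  -- now extend esum to range (n+2)
  unfold esum
  rcases eq_or_lt_of_le h with rfl | hlt
  · rw [Finset.sum_range_succ] at hS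
    have hz0 : ((n:ℤ) + 1 - ((n+1 : ℕ)) : ℤ) ^ n = 0 := by
      rw [show ((n:ℤ) + 1 - ((n+1 : ℕ)) : ℤ) = 0 by push_cast; ring, zero_pow (by omega)]
    rw [hz0, mul_zero, add_zero] at hS
    exact hS
  · rw [← hS]
    refine (Finset.sum_subset (Finset.range_subset_range.mpr (by omega)) ?_).symm
    intro j hj hj2
    have : n + 1 < j := by
      simp only [Finset.mem_range] at hj hj2
      omega
    rw [Nat.choose_eq_zero_of_lt this]
    simp

lemma pascal_split (M m : ℕ) (f : ℕ → ℤ) :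
    ∑ j ∈ range (m+1), (-1:ℤ)^j * ((M+1).choose j) * f j
      = ∑ j ∈ range (m+1), (-1:ℤ)^j * (M.choose j) * f j
        - ∑ j ∈ range m, (-1:ℤ)^j * (M.choose j) * f (j+1) := by
  rw [Finset.sum_range_succ' (fun j => (-1:ℤ)^j * ((M+1).choose j) * f j) m,
      Finset.sum_range_succ' (fun j => (-1:ℤ)^j * (M.choose j) * f j) m]
  rw [eq_sub_iff_add_eq, add_right_comm, ← Finset.sum_add_distrib]
  congr 1
  · apply Finset.sum_congr rfl
    intro i _
    have hcc : (((M+1).choose (i+1) : ℕ) : ℤ) = (M.choose i : ℤ) + (M.choose (i+1) : ℤ) := by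
      rw [Nat.choose_succ_succ M i]; push_cast; ring
    rw [hcc]
    ring
  · simp

lemma esum_rec (n m : ℕ) (h : m ≤ n) :
    esum (n+1) (m+1) = ((m:ℤ)+2) * esum n (m+1) + ((n:ℤ) - m) * esum n m := by
  unfold esum
  rw [pascal_split (n+1) (m+1) (fun j : ℕ => (((m+1:ℕ):ℤ) + 1 - j)^(n+1))]
  rw [Finset.sum_range_succ' (fun j => (-1:ℤ)^j * ((n+1).choose j) * (((m+1:ℕ):ℤ)+1-j)^(n+1)) (m+1),
      Finset.sum_range_succ' (fun j => (-1:ℤ)^j * ((n+1).choose j) * (((m+1:ℕ):ℤ)+1-j)^n) (m+1)]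
  rw [mul_add, Finset.mul_sum, Finset.mul_sum]
  have hb : ((-1:ℤ)^(0:ℕ) * (((n+1).choose 0 : ℕ)) * (((m+1:ℕ):ℤ)+1-((0:ℕ):ℤ))^(n+1))
      = ((m:ℤ)+2) * ((-1:ℤ)^(0:ℕ) * (((n+1).choose 0 : ℕ)) * (((m+1:ℕ):ℤ)+1-((0:ℕ):ℤ))^n) := by
    push_cast
    rw [show ((m:ℤ)+1+1-0) = (m:ℤ)+2 by ring]
    ring
  have hsum : ∑ i ∈ range (m+1), (-1:ℤ)^(i+1) * ((n+1).choose (i+1)) * (((m+1:ℕ):ℤ)+1-((i+1:ℕ):ℤ))^(n+1)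
        - ∑ j ∈ range (m+1), (-1:ℤ)^j * ((n+1).choose j) * (((m+1:ℕ):ℤ)+1-((j+1:ℕ):ℤ))^(n+1)
      = ∑ i ∈ range (m+1), ((m:ℤ)+2) * ((-1:ℤ)^(i+1) * ((n+1).choose (i+1)) * (((m+1:ℕ):ℤ)+1-((i+1:ℕ):ℤ))^n)
        + ∑ j ∈ range (m+1), ((n:ℤ)-m) * ((-1:ℤ)^j * ((n+1).choose j) * ((m:ℤ)+1-j)^n) := by
    rw [← Finset.sum_sub_distrib, ← Finset.sum_add_distrib]
    apply Finset.sum_congr rfl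
    intro i hi
    have hi2 : i ≤ n := le_trans (by have := Finset.mem_range.mp hi; omega) h
    have h1' : ((n:ℤ)+1) * (n.choose i) = ((n+1).choose (i+1)) * ((i:ℤ)+1) := by
      exact_mod_cast Nat.add_one_mul_choose_eq n i
    have h2' : (n.choose i : ℤ) * ((n:ℤ)+1) = ((n+1).choose i) * (((n+1) - i : ℕ) : ℤ) := by
      exact_mod_cast Nat.choose_mul_succ_eq n i
    rw [Nat.cast_sub (by omega)] at h2'
    push_cast at h2' ⊢
    have hkey : ((i:ℤ)+1) * ((n+1).choose (i+1)) = ((n:ℤ)+1-i) * ((n+1).choose i) := by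
      linear_combination h2' - h1'
    linear_combination ((-1:ℤ)^i * ((m:ℤ)+1-(i:ℤ))^n) * hkey
  linarith [hb, hsum]

lemma esum_eq_eul (n : ℕ) (hn : 1 ≤ n) : ∀ m, esum n m = (eul n m : ℤ) := by
  induction n, hn using Nat.le_induction with
  | base =>
    intro m
    match m with
    | 0 => rw [esum_zero, eul_zero]; norm_num
    | m+1 =>
      rw [esum_eq_zero 1 (m+1) le_rfl (by omega), eul_eq_zero 1 (m+1) le_rfl (by omega)]
      norm_num
  | succ n hn ih =>
    intro m
    match m with
    | 0 => rw [esum_zero, eul_zero]; norm_num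
    | m+1 =>
      rcases le_or_gt m n with hle | hgt
      · rw [esum_rec n m hle, ih (m+1), ih m]
        have hrec : eul (n+1) (m+1) = (m+2) * eul n (m+1) + (n-m) * eul n m := rfl
        rw [hrec]
        push_cast [Nat.cast_sub hle]
        ring
      · rw [esum_eq_zero (n+1) (m+1) (by omega) (by omega),
          eul_eq_zero (n+1) (m+1) (by omega) (by omega)]
        norm_num

/-- For `k ≥ 2`, `α = ∑_{j=0}^{k-1} (-1)^(j+1) (k-j)^(2k-2) C(2k+1, j)` is positive. -/
theorem stmt_9 (k : ℕ) (hk : 2 ≤ k) :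
    0 < ∑ j ∈ Finset.range k,
      (-1 : ℤ) ^ (j + 1) * ((k : ℤ) - j) ^ (2 * k - 2) * ((2 * k + 1).choose j) := by
  rcases eq_or_lt_of_le hk with rfl | hk3
  · norm_num [Finset.sum_range_succ]
  obtain ⟨K, rfl⟩ : ∃ K, k = K + 3 := ⟨k - 3, by omega⟩
  rw [show 2*(K+3)-2 = 2*K+4 from by omega, show 2*(K+3)+1 = (2*K+6)+1 from by omega]
  set f : ℕ → ℤ := fun j => (((K+3:ℕ):ℤ) - j)^(2*K+4) with hf
  have h1 := pascal_split (2*K+6) (K+2) f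
  have h2 := pascal_split (2*K+5) (K+2) f
  have h3 := pascal_split (2*K+5) (K+1) (fun j => f (j+1))
  have e2 : ∑ j ∈ range (K+2+1), (-1:ℤ)^j * ((2*K+5).choose j) * f j
      = esum (2*K+4) (K+2) := by
    unfold esum
    apply Finset.sum_congr (by norm_num)
    intro j _
    rw [hf]
    push_cast
    ring_nf
  have e1 : ∑ j ∈ range (K+1+1), (-1:ℤ)^j * ((2*K+5).choose j) * f (j+1)
      = esum (2*K+4) (K+1) := by
    unfold esum
    apply Finset.sum_congr (by norm_num)
    intro j _
    rw [hf]
    push_cast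
    ring_nf
  have e0 : ∑ j ∈ range (K+1), (-1:ℤ)^j * ((2*K+5).choose j) * f (j+1+1)
      = esum (2*K+4) K := by
    unfold esum
    apply Finset.sum_congr (by norm_num)
    intro j _
    rw [hf]
    push_cast
    ring_nf
  have hS : ∑ j ∈ range (K+2+1), (-1:ℤ)^j * (((2*K+6)+1).choose j) * f j
      = esum (2*K+4) (K+2) - 2 * esum (2*K+4) (K+1) + esum (2*K+4) K := by
    rw [h1, h2, h3, e2, e1, e0]
    ring
  have hα : ∑ j ∈ Finset.range (K+3),
        (-1 : ℤ) ^ (j + 1) * (((K+3:ℕ) : ℤ) - j) ^ (2*K+4) * (((2*K+6)+1).choose j)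
      = -(∑ j ∈ range (K+2+1), (-1:ℤ)^j * (((2*K+6)+1).choose j) * f j) := by
    rw [← Finset.sum_neg_distrib]
    apply Finset.sum_congr (by norm_num)
    intro j _
    rw [hf]
    ring
  rw [hα, hS, esum_eq_eul (2*K+4) (by omega) (K+2), esum_eq_eul (2*K+4) (by omega) (K+1),
    esum_eq_eul (2*K+4) (by omega) K,
    show eul (2*K+4) (K+2) = eul (2*K+4) (K+1) from eul_symm (2*K+4) (K+2) (K+1) (by omega)]
  have hlt : eul (2*K+4) K < eul (2*K+4) (K+1) := eul_lt (2*K+4) K (by omega)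
  have hlt' : ((eul (2*K+4) K : ℕ) : ℤ) < ((eul (2*K+4) (K+1) : ℕ) : ℤ) := by
    exact_mod_cast hlt
  linarith
end

section
/- For every integer k ≥ 2, ∑_{j=0}^{k-1} (-1)^{j+1} (k-j)^{2k-2} C(2k+1, j) = A(2k-2, k-2) - A(2k-2, k-3), where A(n,j) denotes the Eulerian number. -/
/-- The Eulerian number `A(n, j)`: the number of permutations of `Fin n` with exactly
`j` descents. -/
def eulerian (n j : ℕ) : ℕ :=
  ((Finset.univ : Finset (Equiv.Perm (Fin n))).filter (fun σ =>
    ((Finset.univ : Finset (Fin n)).filter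
      (fun i : Fin n => ∃ h : (i : ℕ) + 1 < n, σ ⟨(i : ℕ) + 1, h⟩ < σ i)).card = j)).card

/-- Eulerian numbers with an integer (possibly negative) second argument. -/
def eulerianZ (n : ℕ) (j : ℤ) : ℤ :=
  if j < 0 then 0 else eulerian n j.toNat

namespace SA
open Finset Equiv
variable {n : ℕ}

def tv (τ : Perm (Fin n)) (j : ℕ) : ℕ := if h : j < n then (τ ⟨j, h⟩ : ℕ) else n

lemma tv_lt (τ : Perm (Fin n)) {j : ℕ} (h : j < n) : tv τ j < n := by
  simp only [tv, dif_pos h]; exact (τ ⟨j, h⟩).isLt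

lemma tv_of_ge (τ : Perm (Fin n)) {j : ℕ} (h : n ≤ j) : tv τ j = n := by
  rw [tv, dif_neg (by omega)]

lemma tv_le (τ : Perm (Fin n)) (j : ℕ) : tv τ j ≤ n := by
  rcases Nat.lt_or_ge j n with h | h
  · exact (tv_lt τ h).le
  · exact (tv_of_ge τ h).le

def desNum (σ : Perm (Fin n)) : ℕ :=
  ((Finset.univ : Finset (Fin n)).filter
      (fun i : Fin n => ∃ h : (i : ℕ) + 1 < n, σ ⟨(i : ℕ) + 1, h⟩ < σ i)).card

def desSet (τ : Perm (Fin n)) : Finset ℕ :=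
  (Finset.range n).filter (fun j => tv τ (j + 1) < tv τ j)

lemma mem_desSet {τ : Perm (Fin n)} {j : ℕ} :
    j ∈ desSet τ ↔ j < n ∧ tv τ (j + 1) < tv τ j := by
  simp [desSet]

lemma desNum_eq_card_desSet (τ : Perm (Fin n)) : desNum τ = (desSet τ).card := by
  refine Finset.card_bij (fun i _ => (i : ℕ)) ?_ ?_ ?_
  · intro i hi
    simp only [desNum, Finset.mem_filter, Finset.mem_univ, true_and] at hi
    obtain ⟨h, hlt⟩ := hi
    rw [mem_desSet]
    refine ⟨i.isLt, ?_⟩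
    simp only [tv, dif_pos h, dif_pos i.isLt]
    exact hlt
  · intro a _ b _ hab; exact Fin.ext hab
  · intro j hj
    rw [mem_desSet] at hj
    obtain ⟨hj1, hj2⟩ := hj
    refine ⟨⟨j, hj1⟩, ?_, rfl⟩
    simp only [Finset.mem_filter, Finset.mem_univ, true_and]
    by_cases h : j + 1 < n
    · refine ⟨h, ?_⟩
      simp only [tv, dif_pos h, dif_pos hj1] at hj2
      exact hj2
    · exfalso
      rw [tv_of_ge τ (by omega)] at hj2
      exact absurd (tv_lt τ hj1) (by omega)

lemma desNum_le (τ : Perm (Fin n)) : desNum τ ≤ n := by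
  rw [desNum_eq_card_desSet]
  exact le_trans (Finset.card_filter_le _ _) (by simp)

/-! ### Insertion -/

def insF (τ : Perm (Fin n)) (p : Fin (n + 1)) (j : Fin (n + 1)) : Fin (n + 1) :=
  if h : (j : ℕ) < (p : ℕ) then (τ ⟨j, by have := p.isLt; omega⟩).castSucc
  else if h2 : (j : ℕ) = (p : ℕ) then Fin.last n
  else (τ ⟨(j : ℕ) - 1, by have := j.isLt; omega⟩).castSucc

lemma insF_val_lt (τ : Perm (Fin n)) (p : Fin (n + 1)) (j : Fin (n + 1))
    (h : (j : ℕ) < (p : ℕ)) : ((insF τ p j) : ℕ) = tv τ (j : ℕ) := by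
  have hj : (j : ℕ) < n := by have := p.isLt; omega
  rw [insF, dif_pos h, tv, dif_pos hj]
  rfl

lemma insF_val_eq (τ : Perm (Fin n)) (p : Fin (n + 1)) (j : Fin (n + 1))
    (h : (j : ℕ) = (p : ℕ)) : ((insF τ p j) : ℕ) = n := by
  rw [insF, dif_neg (by omega), dif_pos h]
  rfl

lemma insF_val_gt (τ : Perm (Fin n)) (p : Fin (n + 1)) (j : Fin (n + 1))
    (h : (p : ℕ) < (j : ℕ)) : ((insF τ p j) : ℕ) = tv τ ((j : ℕ) - 1) := by
  have hj : (j : ℕ) - 1 < n := by have := j.isLt; omega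
  rw [insF, dif_neg (by omega), dif_neg (by omega), tv, dif_pos hj]
  rfl

lemma insF_inj (τ : Perm (Fin n)) (p : Fin (n + 1)) : Function.Injective (insF τ p) := by
  have key : ∀ (x y : ℕ) (hx : x < n) (hy : y < n),
      (τ ⟨x, hx⟩).castSucc = (τ ⟨y, hy⟩).castSucc → x = y := by
    intro x y hx hy hh
    have := τ.injective (Fin.castSucc_injective _ hh)
    exact congrArg Fin.val this
  have hne : ∀ (x : Fin n), (τ x).castSucc ≠ Fin.last n := fun x => (Fin.castSucc_lt_last _).ne
  intro a b hab
  unfold insF at hab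
  split_ifs at hab with h1 h2 h3 h4 h5 h6 h7
  · exact Fin.ext (key _ _ _ _ hab)
  · exact absurd hab (hne _)
  · have := key _ _ _ _ hab; exact Fin.ext (by omega)
  · exact absurd hab.symm (hne _)
  · exact Fin.ext (by omega)
  · exact absurd hab.symm (hne _)
  · have := key _ _ _ _ hab; exact Fin.ext (by omega)
  · exact absurd hab (hne _)
  · have := key _ _ _ _ hab; exact Fin.ext (by omega)

noncomputable def insPerm (τ : Perm (Fin n)) (p : Fin (n + 1)) : Perm (Fin (n + 1)) :=
  Equiv.ofBijective (insF τ p) (Finite.injective_iff_bijective.mp (insF_inj τ p))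

lemma insPerm_apply (τ : Perm (Fin n)) (p : Fin (n + 1)) (j : Fin (n + 1)) :
    insPerm τ p j = insF τ p j := rfl

lemma ins_bijective :
    Function.Bijective (fun x : Perm (Fin n) × Fin (n + 1) => insPerm x.1 x.2) := by
  rw [Fintype.bijective_iff_injective_and_card]
  constructor
  · rintro ⟨τ, p⟩ ⟨τ', p'⟩ hh
    simp only at hh
    have happ : ∀ j, insF τ p j = insF τ' p' j := fun j => by
      rw [← insPerm_apply, ← insPerm_apply, hh]
    have hpp : p = p' := by
      by_contra hne
      have h1 : insF τ p p = Fin.last n := by rw [insF, dif_neg (by omega), dif_pos rfl]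
      have h2 : insF τ' p' p ≠ Fin.last n := by
        rcases Nat.lt_or_ge (p : ℕ) (p' : ℕ) with h | h
        · rw [insF, dif_pos h]; exact (Fin.castSucc_lt_last _).ne
        · have h' : (p' : ℕ) < (p : ℕ) := by
            rcases Nat.lt_or_ge (p' : ℕ) (p : ℕ) with h'' | h''
            · exact h''
            · exact absurd (Fin.ext (by omega : (p:ℕ) = (p':ℕ))) hne
          rw [insF, dif_neg (by omega), dif_neg (by omega)]
          exact (Fin.castSucc_lt_last _).ne
      exact h2 ((happ p).symm.trans h1)
    subst hpp
    have hττ : τ = τ' := by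
      apply Equiv.ext
      intro i
      rcases Nat.lt_or_ge (i : ℕ) (p : ℕ) with h | h
      · have e1 : insF τ p i.castSucc = (τ i).castSucc := by
          rw [insF, dif_pos (by simpa using h)]
          rfl
        have e2 : insF τ' p i.castSucc = (τ' i).castSucc := by
          rw [insF, dif_pos (by simpa using h)]
          rfl
        have := (e1.symm.trans (happ i.castSucc)).trans e2
        exact Fin.castSucc_injective _ this
      · have e1 : insF τ p i.succ = (τ i).castSucc := by
          rw [insF, dif_neg (by simp; omega), dif_neg (by simp; omega)]
          congr 1
        have e2 : insF τ' p i.succ = (τ' i).castSucc := by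
          rw [insF, dif_neg (by simp; omega), dif_neg (by simp; omega)]
          congr 1
        have := (e1.symm.trans (happ i.succ)).trans e2
        exact Fin.castSucc_injective _ this
    rw [hττ]
  · simp [Fintype.card_perm, Nat.factorial_succ, Nat.mul_comm]

/-! ### values of the inserted permutation -/

variable (τ : Perm (Fin n)) (p : Fin (n + 1))

lemma tvs_lt {j : ℕ} (h : j < (p : ℕ)) : tv (insPerm τ p) j = tv τ j := by
  have hj : j < n + 1 := by have := p.isLt; omega
  rw [tv, dif_pos hj]
  exact insF_val_lt τ p ⟨j, hj⟩ h

lemma tvs_eq : tv (insPerm τ p) (p : ℕ) = n := by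
  rw [tv, dif_pos p.isLt]
  exact insF_val_eq τ p ⟨(p : ℕ), p.isLt⟩ rfl

lemma tvs_gt {j : ℕ} (h : (p : ℕ) < j) (h2 : j ≤ n) : tv (insPerm τ p) j = tv τ (j - 1) := by
  have hj : j < n + 1 := by omega
  rw [tv, dif_pos hj]
  exact insF_val_gt τ p ⟨j, hj⟩ h

lemma tvs_junk {j : ℕ} (h : n + 1 ≤ j) : tv (insPerm τ p) j = n + 1 := tv_of_ge _ h

/-! ### descent sets of the inserted permutation -/

lemma L1 {j : ℕ} (h : j + 1 < (p : ℕ)) : j ∈ desSet (insPerm τ p) ↔ j ∈ desSet τ := by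
  have hp := p.isLt
  rw [mem_desSet, mem_desSet, tvs_lt τ p h, tvs_lt τ p (by omega)]
  omega

lemma L2 {j : ℕ} (h : j + 1 = (p : ℕ)) : j ∉ desSet (insPerm τ p) := by
  have hp := p.isLt
  rw [mem_desSet, h, tvs_eq τ p, tvs_lt τ p (by omega)]
  have := tv_le τ j
  omega

lemma L3 : (p : ℕ) ∈ desSet (insPerm τ p) ↔ (p : ℕ) < n := by
  have hp := p.isLt
  rw [mem_desSet, tvs_eq]
  constructor
  · rintro ⟨h1, h2⟩
    by_contra hc
    have hpn : (p : ℕ) = n := by omega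
    rw [hpn, tvs_junk τ p (by omega)] at h2
    omega
  · intro h
    refine ⟨by omega, ?_⟩
    rw [tvs_gt τ p (by omega) (by omega)]
    have : ((p : ℕ) + 1 - 1) = (p : ℕ) := by omega
    rw [this]
    exact tv_lt τ h

lemma L4 {j : ℕ} (h : (p : ℕ) < j) : j ∈ desSet (insPerm τ p) ↔ j - 1 ∈ desSet τ := by
  rcases Nat.lt_or_ge j (n + 1) with hj | hj
  · -- j ≤ n
    rcases Nat.lt_or_ge j n with hjn | hjn
    · -- p < j < n
      rw [mem_desSet, mem_desSet, tvs_gt τ p h (by omega), tvs_gt τ p (by omega) (by omega)]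
      have e1 : j + 1 - 1 = j := by omega
      have e2 : j - 1 + 1 = j := by omega
      rw [e1, e2]
      omega
    · -- j = n
      have hjn' : j = n := by omega
      rw [mem_desSet, mem_desSet]
      have e1 : tv (insPerm τ p) (j + 1) = n + 1 := tvs_junk τ p (by omega)
      have h1 : tv (insPerm τ p) j ≤ n + 1 := tv_le _ _
      have h2 := tv_le τ (j - 1 + 1)
      have h3 := tv_le τ (j - 1)
      have h4 : tv τ (j - 1 + 1) = n := tv_of_ge τ (by omega)
      constructor
      · rintro ⟨_, hlt⟩; omega
      · rintro ⟨hr, _⟩; omega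
  · rw [mem_desSet, mem_desSet]
    constructor
    · rintro ⟨h1, _⟩; omega
    · rintro ⟨h1, _⟩; omega


/-! ### case analysis for descent sets -/

def phi (p : ℕ) (j : ℕ) : ℕ := if j < p then j else j + 1

lemma phi_inj (p : ℕ) : Function.Injective (phi p) := by
  intro x y h
  unfold phi at h
  split_ifs at h <;> omega

lemma phi_ne (p : ℕ) (x : ℕ) : phi p x ≠ p := by
  unfold phi; split_ifs <;> omega

lemma not_mem_image_phi (p : ℕ) (s : Finset ℕ) : p ∉ s.image (phi p) := by
  rw [Finset.mem_image]
  rintro ⟨x, _, hx⟩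
  exact phi_ne p x hx

lemma desSet_ins_case1 (hp : (p : ℕ) = n) : desSet (insPerm τ p) = desSet τ := by
  ext j
  rcases Nat.lt_trichotomy (j + 1) (p : ℕ) with h | h | h
  · exact L1 τ p h
  · refine iff_of_false (L2 τ p h) ?_
    rw [mem_desSet, tv_of_ge τ (by omega)]
    have := tv_le τ j
    omega
  · rcases eq_or_lt_of_le (Nat.le_of_lt_succ h) with he | hl
    · rw [← he]
      refine iff_of_false (fun hh => by have := (L3 τ p).mp hh; omega) ?_
      rw [mem_desSet]
      omega
    · rw [L4 τ p hl]
      refine iff_of_false (fun hh => ?_) (fun hh => ?_) <;> rw [mem_desSet] at hh <;> omega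

lemma desSet_ins_case2 (hp : (p : ℕ) < n) (h0 : 0 < (p : ℕ)) (hd : (p : ℕ) - 1 ∈ desSet τ) :
    desSet (insPerm τ p) = insert (p : ℕ) (((desSet τ).erase ((p : ℕ) - 1)).image (phi p)) := by
  ext j
  simp only [Finset.mem_insert, Finset.mem_image, Finset.mem_erase]
  constructor
  · intro hj
    rcases Nat.lt_trichotomy (j + 1) (p : ℕ) with h | h | h
    · exact Or.inr ⟨j, ⟨by omega, (L1 τ p h).mp hj⟩, by rw [phi, if_pos (by omega)]⟩
    · exact absurd hj (L2 τ p h)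
    · rcases eq_or_lt_of_le (Nat.le_of_lt_succ h) with he | hl
      · exact Or.inl he.symm
      · exact Or.inr ⟨j - 1, ⟨by omega, (L4 τ p hl).mp hj⟩,
          by rw [phi, if_neg (by omega)]; omega⟩
  · rintro (rfl | ⟨x, ⟨hne, hx⟩, rfl⟩)
    · exact (L3 τ p).mpr hp
    · have hxr : x < n := (mem_desSet.mp hx).1
      rcases Nat.lt_or_ge x (p : ℕ) with h | h
      · have hx1 : x + 1 < (p : ℕ) := by omega
        rw [phi, if_pos h]
        exact (L1 τ p hx1).mpr hx
      · rw [phi, if_neg (by omega)]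
        apply (L4 τ p (by omega)).mpr
        have e : x + 1 - 1 = x := by omega
        rw [e]
        exact hx

lemma desSet_ins_case3 (hp : (p : ℕ) < n) (hnd : ¬(0 < (p : ℕ) ∧ (p : ℕ) - 1 ∈ desSet τ)) :
    desSet (insPerm τ p) = insert (p : ℕ) ((desSet τ).image (phi p)) := by
  ext j
  simp only [Finset.mem_insert, Finset.mem_image]
  constructor
  · intro hj
    rcases Nat.lt_trichotomy (j + 1) (p : ℕ) with h | h | h
    · exact Or.inr ⟨j, (L1 τ p h).mp hj, by rw [phi, if_pos (by omega)]⟩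
    · exact absurd hj (L2 τ p h)
    · rcases eq_or_lt_of_le (Nat.le_of_lt_succ h) with he | hl
      · exact Or.inl he.symm
      · exact Or.inr ⟨j - 1, (L4 τ p hl).mp hj, by rw [phi, if_neg (by omega)]; omega⟩
  · rintro (rfl | ⟨x, hx, rfl⟩)
    · exact (L3 τ p).mpr hp
    · rcases Nat.lt_or_ge x (p : ℕ) with h | h
      · have hx1 : x + 1 < (p : ℕ) := by
          rcases Nat.lt_or_ge (x + 1) (p : ℕ) with h' | h'
          · exact h'
          · have hxe : x = (p : ℕ) - 1 := by omega
            exact absurd ⟨by omega, hxe ▸ hx⟩ hnd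
        rw [phi, if_pos h]
        exact (L1 τ p hx1).mpr hx
      · rw [phi, if_neg (by omega)]
        apply (L4 τ p (by omega)).mpr
        have e : x + 1 - 1 = x := by omega
        rw [e]
        exact hx

def good (τ : Perm (Fin n)) (p : Fin (n + 1)) : Prop :=
  (p : ℕ) = n ∨ (0 < (p : ℕ) ∧ (p : ℕ) - 1 ∈ desSet τ)

instance : DecidablePred (good τ) := fun p => by unfold good; infer_instance

lemma desNum_insPerm : desNum (insPerm τ p) = desNum τ + (if good τ p then 0 else 1) := by
  rw [desNum_eq_card_desSet, desNum_eq_card_desSet]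
  by_cases h1 : (p : ℕ) = n
  · rw [desSet_ins_case1 τ p h1, if_pos (show good τ p from Or.inl h1)]
    omega
  · have hp : (p : ℕ) < n := by have := p.isLt; omega
    by_cases h2 : 0 < (p : ℕ) ∧ (p : ℕ) - 1 ∈ desSet τ
    · rw [if_pos (show good τ p from Or.inr h2), desSet_ins_case2 τ p hp h2.1 h2.2,
        Finset.card_insert_of_notMem (not_mem_image_phi _ _),
        Finset.card_image_of_injective _ (phi_inj _),
        Finset.card_erase_of_mem h2.2]
      have : 0 < (desSet τ).card := Finset.card_pos.mpr ⟨_, h2.2⟩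
      omega
    · rw [if_neg (by unfold good; tauto), desSet_ins_case3 τ p hp h2,
        Finset.card_insert_of_notMem (not_mem_image_phi _ _),
        Finset.card_image_of_injective _ (phi_inj _)]

lemma card_good (τ : Perm (Fin n)) :
    ((Finset.univ : Finset (Fin (n + 1))).filter (good τ)).card = desNum τ + 1 := by
  have hT : ((insert n ((desSet τ).image (· + 1))) : Finset ℕ).card = desNum τ + 1 := by
    rw [Finset.card_insert_of_notMem, Finset.card_image_of_injective _ (add_left_injective 1),
      desNum_eq_card_desSet]
    rw [Finset.mem_image]
    rintro ⟨x, hx, hx1⟩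
    rw [mem_desSet] at hx
    have h1 : x + 1 = n := hx1
    rw [tv_of_ge τ (by omega)] at hx
    have := tv_le τ x
    omega
  rw [← hT]
  refine Finset.card_bij (fun q _ => (q : ℕ)) ?_ ?_ ?_
  · intro q hq
    show (q : ℕ) ∈ _
    rw [Finset.mem_filter] at hq
    rcases hq.2 with h | ⟨h0, hd⟩
    · rw [h]; exact Finset.mem_insert_self _ _
      
    · refine Finset.mem_insert_of_mem ?_
      rw [Finset.mem_image]
      exact ⟨(q : ℕ) - 1, hd, by omega⟩
  · intro a _ b _ hab; exact Fin.ext hab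
  · intro x hx
    rcases Finset.mem_insert.mp hx with h | hx'
    · exact ⟨⟨n, by omega⟩, Finset.mem_filter.mpr ⟨Finset.mem_univ _, Or.inl rfl⟩, h.symm⟩
    · rw [Finset.mem_image] at hx'
      obtain ⟨j, hj, rfl⟩ := hx'
      have hjn : j < n := (mem_desSet.mp hj).1
      refine ⟨⟨j + 1, by omega⟩, Finset.mem_filter.mpr ⟨Finset.mem_univ _, Or.inr ⟨?_, ?_⟩⟩, rfl⟩
      · simp
      · simpa using hj


lemma eulerian_eq_card (m : ℕ) (nn : ℕ) :
    eulerian nn m = ((Finset.univ : Finset (Perm (Fin nn))).filter (fun σ => desNum σ = m)).card :=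
  rfl

lemma inner_sum (τ : Perm (Fin n)) (m : ℕ) :
    (∑ p : Fin (n + 1), if desNum (insPerm τ p) = m then 1 else 0) =
      (if desNum τ = m then desNum τ + 1 else 0) +
        (if desNum τ + 1 = m then n - desNum τ else 0) := by
  classical
  rw [← Finset.sum_filter_add_sum_filter_not Finset.univ (good τ)]
  have hcard := card_good τ
  have hle := desNum_le τ
  have hcard' : ((Finset.univ : Finset (Fin (n + 1))).filter (fun p => ¬ good τ p)).card
      = n - desNum τ := by
    have := Finset.card_filter_add_card_filter_not
      (s := (Finset.univ : Finset (Fin (n + 1)))) (p := good τ)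
    simp only [Finset.card_univ, Fintype.card_fin] at this
    omega
  have e1 : ∀ p ∈ (Finset.univ : Finset (Fin (n + 1))).filter (good τ),
      (if desNum (insPerm τ p) = m then (1:ℕ) else 0) = if desNum τ = m then 1 else 0 := by
    intro p hp
    rw [Finset.mem_filter] at hp
    rw [desNum_insPerm, if_pos hp.2, Nat.add_zero]
  have e2 : ∀ p ∈ (Finset.univ : Finset (Fin (n + 1))).filter (fun p => ¬ good τ p),
      (if desNum (insPerm τ p) = m then (1:ℕ) else 0) = if desNum τ + 1 = m then 1 else 0 := by
    intro p hp
    rw [Finset.mem_filter] at hp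
    rw [desNum_insPerm, if_neg hp.2]
  rw [Finset.sum_congr rfl e1, Finset.sum_congr rfl e2, Finset.sum_const, Finset.sum_const,
    hcard, hcard', smul_eq_mul, smul_eq_mul]
  by_cases h1 : desNum τ = m <;> by_cases h2 : desNum τ + 1 = m <;>
    simp [h1, h2] <;> omega

lemma eulerian_rec (m : ℕ) :
    eulerian (n + 1) m =
      (m + 1) * eulerian n m +
        (if m = 0 then 0 else (n - (m - 1)) * eulerian n (m - 1)) := by
  classical
  rw [eulerian_eq_card m (n+1), Finset.card_filter]
  rw [← Fintype.sum_bijective _ (ins_bijective (n := n)) _ _ (fun x => rfl)]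
  rw [Fintype.sum_prod_type]
  simp only [inner_sum]
  rw [Finset.sum_add_distrib]
  congr 1
  · have : ∀ τ : Perm (Fin n), (if desNum τ = m then desNum τ + 1 else 0)
        = (m + 1) * (if desNum τ = m then 1 else 0) := by
      intro τ
      by_cases h : desNum τ = m <;> simp [h]
    rw [Finset.sum_congr rfl (fun τ _ => this τ), ← Finset.mul_sum,
      eulerian_eq_card m n, Finset.card_filter]
  · by_cases hm : m = 0
    · subst hm
      simp
    · rw [if_neg hm]
      have : ∀ τ : Perm (Fin n), (if desNum τ + 1 = m then n - desNum τ else 0)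
          = (n - (m - 1)) * (if desNum τ = m - 1 then 1 else 0) := by
        intro τ
        by_cases h : desNum τ + 1 = m
        · rw [if_pos h, if_pos (by omega), mul_one]
          congr 1
          omega
        · rw [if_neg h, if_neg (by omega), mul_zero]
      rw [Finset.sum_congr rfl (fun τ _ => this τ), ← Finset.mul_sum,
        eulerian_eq_card (m-1) n, Finset.card_filter]




lemma idZ (N t : ℕ) :
    ((N : ℤ) + 1 - t) * ((N + 1).choose t) = ((t : ℤ) + 1) * ((N + 1).choose (t + 1)) := by
  rcases le_or_gt t (N + 1) with h | h
  · have A := Nat.choose_mul_succ_eq N t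
    have B := Nat.add_one_mul_choose_eq N t
    have key : (N + 1).choose t * (N + 1 - t) = (N + 1).choose (t + 1) * (t + 1) := by
      rw [← A, Nat.mul_comm]
      exact B
    have hcast := congrArg (Nat.cast : ℕ → ℤ) key
    push_cast at hcast
    rw [Nat.cast_sub h] at hcast
    push_cast at hcast
    linarith
  · have h1 : (N + 1).choose t = 0 := Nat.choose_eq_zero_of_lt h
    have h2 : (N + 1).choose (t + 1) = 0 := Nat.choose_eq_zero_of_lt (by omega)
    rw [h1, h2]
    simp

def B (nn m : ℕ) : ℤ :=
  ∑ i ∈ Finset.range (m + 1), (-1) ^ i * ((nn + 1).choose i) * ((m + 1 - i : ℕ) : ℤ) ^ nn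

lemma B_zero (nn : ℕ) : B nn 0 = 1 := by
  simp [B]

lemma B_zero_left {m : ℕ} (hm : 1 ≤ m) : B 0 m = 0 := by
  rw [B]
  have h2 : (2 : ℕ) ≤ m + 1 := by omega
  have hz : ∀ x ∈ Finset.range (m + 1), x ∉ Finset.range 2 →
      (-1 : ℤ) ^ x * ((0 + 1).choose x) * ((m + 1 - x : ℕ) : ℤ) ^ 0 = 0 := by
    intro x _ hx
    rw [Finset.mem_range, not_lt] at hx
    have : Nat.choose 1 x = 0 := Nat.choose_eq_zero_of_lt (by omega)
    rw [Nat.zero_add, this]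
    simp
  rw [← Finset.sum_subset (Finset.range_subset_range.mpr h2) hz]
  simp [Finset.sum_range_succ]

lemma B_rec (nn m : ℕ) :
    B (nn + 1) (m + 1) = ((m : ℤ) + 2) * B nn (m + 1) + ((nn : ℤ) - m) * B nn m := by
  have hK : ((nn : ℤ) - m) * B nn m
      = ∑ t ∈ Finset.range (m + 2),
          (if t = 0 then 0 else
            ((nn : ℤ) - m) * ((-1) ^ (t - 1) * ((nn + 1).choose (t - 1))
              * ((m + 2 - t : ℕ) : ℤ) ^ nn)) := by
    rw [Finset.sum_range_succ' (fun t => if t = 0 then (0:ℤ) else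
      ((nn : ℤ) - m) * ((-1) ^ (t - 1) * ((nn + 1).choose (t - 1))
        * ((m + 2 - t : ℕ) : ℤ) ^ nn)) (m + 1)]
    simp only [if_pos rfl, if_true, ite_true, add_zero, if_neg (Nat.succ_ne_zero _), Nat.add_sub_cancel]
    rw [B, Finset.mul_sum]
    apply Finset.sum_congr rfl
    intro i _
    have e : m + 2 - (i + 1) = m + 1 - i := by omega
    rw [e]
  rw [hK, B, B, Finset.mul_sum, ← Finset.sum_add_distrib]
  apply Finset.sum_congr rfl
  intro i hi
  rw [Finset.mem_range] at hi
  rcases Nat.eq_zero_or_pos i with rfl | hpos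
  · rw [if_pos rfl, add_zero]
    simp only [pow_zero, Nat.choose_zero_right, Nat.cast_one, one_mul, mul_one, Nat.sub_zero]
    push_cast
    ring
  · obtain ⟨t, rfl⟩ : ∃ t, i = t + 1 := ⟨i - 1, by omega⟩
    rw [if_neg (Nat.succ_ne_zero _)]
    simp only [Nat.add_sub_cancel]
    have ht : t ≤ m := by omega
    have hc : ((m + 2 - (t + 1) : ℕ) : ℤ) = (m : ℤ) + 1 - t := by
      have e : (m + 2 - (t + 1) : ℕ) = m + 1 - t := by omega
      rw [e, Nat.cast_sub (by omega : t ≤ m + 1)]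
      push_cast
      ring
    have hpascal : (((nn + 1) + 1).choose (t + 1) : ℤ)
        = ((nn + 1).choose t : ℤ) + ((nn + 1).choose (t + 1) : ℤ) := by
      have := Nat.choose_succ_succ (nn + 1) t
      exact_mod_cast congrArg (Nat.cast : ℕ → ℤ) this
    have key := idZ nn t
    rw [hc, hpascal]
    linear_combination ((-1 : ℤ) ^ (t + 1) * ((m : ℤ) + 1 - t) ^ nn) * key




lemma iter_zero_fun (N : ℕ) : (fwdDiff (1:ℤ))^[N] (fun _ : ℤ => (0:ℤ)) = fun _ => (0:ℤ) := by
  induction N with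
  | zero => rfl
  | succ n ih =>
      rw [Function.iterate_succ_apply]
      have : fwdDiff (1:ℤ) (fun _ : ℤ => (0:ℤ)) = fun _ : ℤ => (0:ℤ) := by
        funext y; simp [fwdDiff]
      rw [this, ih]

lemma vanish (d : ℕ) : ∀ N : ℕ, ∀ c : ℤ, d < N →
    (fwdDiff (1:ℤ))^[N] (fun y : ℤ => (c - y) ^ d) = fun _ => (0:ℤ) := by
  induction d using Nat.strong_induction_on with
  | _ d ih =>
    intro N c hdN
    obtain ⟨N', rfl⟩ : ∃ N', N = N' + 1 := ⟨N - 1, by omega⟩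
    rw [Function.iterate_succ_apply]
    have step : fwdDiff (1:ℤ) (fun y : ℤ => (c - y) ^ d)
        = fun y : ℤ => ∑ j ∈ Finset.range d,
            ((-1 : ℤ) ^ (j + d) * (d.choose j)) * (c - y) ^ j := by
      funext y
      rw [fwdDiff]
      have expand : (c - (y + 1)) ^ d = ((c - y) - 1) ^ d := by ring_nf
      rw [expand, sub_pow (c - y) 1 d, Finset.sum_range_succ]
      simp only [one_pow, Nat.choose_self, Nat.sub_self, pow_zero, Nat.cast_one, mul_one]
      have : (-1 : ℤ) ^ (d + d) = 1 := by
        rw [← two_mul, pow_mul]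
        norm_num
      rw [this, one_mul, add_sub_cancel_right]
      apply Finset.sum_congr rfl
      intro j _
      ring
    rw [step]
    have eqsum : (fun y : ℤ => ∑ j ∈ Finset.range d,
        ((-1 : ℤ) ^ (j + d) * (d.choose j)) * (c - y) ^ j)
        = ∑ j ∈ Finset.range d, ((-1 : ℤ) ^ (j + d) * (d.choose j)) • (fun y : ℤ => (c - y) ^ j) := by
      funext y
      simp [Finset.sum_apply]
    rw [eqsum, fwdDiff_iter_finset_sum]
    apply Finset.sum_eq_zero
    intro j hj
    rw [Finset.mem_range] at hj
    rw [fwdDiff_iter_const_smul, ih j hj N' c (by omega)]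
    funext y
    simp

lemma alt_sum_vanish (d N : ℕ) (c : ℤ) (h : d < N) :
    ∑ i ∈ Finset.range (N + 1), (-1 : ℤ) ^ (N - i) * (N.choose i) * (c - i) ^ d = 0 := by
  have hh := fwdDiff_iter_eq_sum_shift (1 : ℤ) (fun y : ℤ => (c - y) ^ d) N 0
  rw [vanish d N c h] at hh
  have : ∀ i ∈ Finset.range (N + 1),
      ((-1 : ℤ) ^ (N - i) * (N.choose i)) • ((fun y : ℤ => (c - y) ^ d) (0 + i • (1:ℤ)))
        = (-1 : ℤ) ^ (N - i) * (N.choose i) * (c - i) ^ d := by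
    intro i _
    simp [smul_eq_mul, nsmul_eq_mul]
  rw [Finset.sum_congr rfl this] at hh
  exact hh.symm



/-! ### eulerian equals B -/

lemma eulerian_eq_zero_of_lt {nn j : ℕ} (h : nn < j) : eulerian nn j = 0 := by
  rw [eulerian_eq_card, Finset.card_eq_zero, Finset.filter_eq_empty_iff]
  intro σ _
  have := desNum_le σ
  omega

lemma eulerian_zero_right (m : ℕ) : eulerian 0 m = if m = 0 then 1 else 0 := by
  rw [eulerian_eq_card]
  have hd : ∀ σ : Perm (Fin 0), desNum σ = 0 := fun σ => by
    rw [desNum_eq_card_desSet]; simp [desSet]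
  by_cases hm : m = 0
  · subst hm
    rw [if_pos rfl, Finset.filter_true_of_mem (fun σ _ => hd σ), Finset.card_univ]
    simp
  · rw [if_neg hm, Finset.card_eq_zero, Finset.filter_eq_empty_iff]
    intro σ _
    rw [hd σ]
    omega

lemma eulerian_eq_B (nn : ℕ) : ∀ m, (eulerian nn m : ℤ) = B nn m := by
  induction nn with
  | zero =>
    intro m
    rcases Nat.eq_zero_or_pos m with rfl | hm
    · rw [eulerian_zero_right, if_pos rfl, B_zero]; norm_num
    · rw [eulerian_zero_right, if_neg (by omega), B_zero_left hm]; norm_num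
  | succ n ih =>
    intro m
    rcases m with _ | m'
    · have h : eulerian (n + 1) 0 = eulerian n 0 := by simpa using eulerian_rec (n := n) 0
      rw [h, B_zero, ih 0, B_zero]
    · have h := eulerian_rec (n := n) (m' + 1)
      rw [if_neg (Nat.succ_ne_zero _)] at h
      simp only [Nat.add_sub_cancel] at h
      have hc := congrArg (Nat.cast : ℕ → ℤ) h
      push_cast at hc
      rw [B_rec, ← ih (m' + 1), ← ih m']
      rcases le_or_gt m' n with hle | hlt
      · have h2 : ((n - m' : ℕ) : ℤ) = (n : ℤ) - m' := Nat.cast_sub hle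
        rw [h2] at hc
        rw [hc]
        ring
      · have hz : eulerian n m' = 0 := eulerian_eq_zero_of_lt hlt
        have h2 : (n - m' : ℕ) = 0 := by omega
        rw [hz, h2] at hc
        rw [hc, hz]
        push_cast
        ring

/-! ### final steps -/

lemma step1 (a : ℕ) : B (2*a+4) (a+1) - B (2*a+4) a
    = ∑ i ∈ Finset.range (a+2),
        (-1 : ℤ)^i * (((2*a+6).choose i : ℕ) : ℤ) * ((a+2-i : ℕ) : ℤ)^(2*a+4) := by
  have hsecond : B (2*a+4) a
      = ∑ t ∈ Finset.range (a+2),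
          (if t = 0 then 0 else
            (-1 : ℤ)^(t-1) * (((2*a+4+1).choose (t-1) : ℕ) : ℤ)
              * ((a+2-t : ℕ) : ℤ)^(2*a+4)) := by
    rw [Finset.sum_range_succ' (fun t => if t = 0 then (0:ℤ) else
      (-1 : ℤ)^(t-1) * (((2*a+4+1).choose (t-1) : ℕ) : ℤ) * ((a+2-t : ℕ) : ℤ)^(2*a+4)) (a+1)]
    simp only [if_pos rfl, if_true, ite_true, add_zero, if_neg (Nat.succ_ne_zero _),
      Nat.add_sub_cancel]
    rw [B]
    apply Finset.sum_congr rfl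
    intro i _
    have e : a + 2 - (i + 1) = a + 1 - i := by omega
    rw [e]
  rw [B, hsecond, ← Finset.sum_sub_distrib]
  apply Finset.sum_congr rfl
  intro i hi
  rw [Finset.mem_range] at hi
  rcases Nat.eq_zero_or_pos i with rfl | hpos
  · rw [if_pos rfl, sub_zero, show a+1+1 = a+2 by omega]
    simp [Nat.choose_zero_right]
  · obtain ⟨t, rfl⟩ : ∃ t, i = t + 1 := ⟨i - 1, by omega⟩
    rw [if_neg (Nat.succ_ne_zero _)]
    simp only [Nat.add_sub_cancel]
    have hpascal : (((2*a+6).choose (t+1) : ℕ) : ℤ)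
        = (((2*a+5).choose t : ℕ) : ℤ) + (((2*a+5).choose (t+1) : ℕ) : ℤ) := by
      have h1 : (2*a+6) = (2*a+5) + 1 := by omega
      rw [h1]
      exact_mod_cast congrArg (Nat.cast : ℕ → ℤ) (Nat.choose_succ_succ (2*a+5) t)
    have h2 : (2*a+4+1) = 2*a+5 := by omega
    rw [h2, hpascal]
    ring
  
lemma step2 (a : ℕ) :
    (∑ j ∈ Finset.range (a+3),
        (-1 : ℤ)^(j+1) * (((a:ℤ)+3) - j)^(2*a+4) * (((2*a+7).choose j : ℕ) : ℤ))
    + (∑ i ∈ Finset.range (a+3),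
        (-1 : ℤ)^i * (((2*a+6).choose i : ℕ) : ℤ) * (((a:ℤ)+3) - i)^(2*a+4))
    = ∑ i ∈ Finset.range (a+2),
        (-1 : ℤ)^i * (((2*a+6).choose i : ℕ) : ℤ) * ((a+2-i : ℕ) : ℤ)^(2*a+4) := by
  rw [← Finset.sum_add_distrib]
  have e1 : ∀ j ∈ Finset.range (a+3),
      ((-1 : ℤ)^(j+1) * (((a:ℤ)+3) - j)^(2*a+4) * (((2*a+7).choose j : ℕ) : ℤ)
        + (-1 : ℤ)^j * (((2*a+6).choose j : ℕ) : ℤ) * (((a:ℤ)+3) - j)^(2*a+4))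
      = (if j = 0 then 0 else
          (-1 : ℤ)^(j+1) * (((a:ℤ)+3) - j)^(2*a+4) * (((2*a+6).choose (j-1) : ℕ) : ℤ)) := by
    intro j _
    rcases Nat.eq_zero_or_pos j with rfl | hpos
    · rw [if_pos rfl]
      norm_num
    · obtain ⟨t, rfl⟩ : ∃ t, j = t + 1 := ⟨j - 1, by omega⟩
      rw [if_neg (Nat.succ_ne_zero _)]
      simp only [Nat.add_sub_cancel]
      have hpascal : (((2*a+7).choose (t+1) : ℕ) : ℤ)
          = (((2*a+6).choose t : ℕ) : ℤ) + (((2*a+6).choose (t+1) : ℕ) : ℤ) := by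
        have h1 : (2*a+7) = (2*a+6) + 1 := by omega
        rw [h1]
        exact_mod_cast congrArg (Nat.cast : ℕ → ℤ) (Nat.choose_succ_succ (2*a+6) t)
      rw [hpascal]
      ring
  rw [Finset.sum_congr rfl e1]
  rw [Finset.sum_range_succ' (fun j => if j = 0 then (0:ℤ) else
      (-1 : ℤ)^(j+1) * (((a:ℤ)+3) - j)^(2*a+4) * (((2*a+6).choose (j-1) : ℕ) : ℤ)) (a+2)]
  simp only [if_pos rfl, if_true, ite_true, add_zero, if_neg (Nat.succ_ne_zero _),
    Nat.add_sub_cancel]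
  apply Finset.sum_congr rfl
  intro t ht
  rw [Finset.mem_range] at ht
  have hc : (((a+2-t : ℕ)) : ℤ) = ((a:ℤ)+3) - (t+1) := by
    rw [Nat.cast_sub (by omega : t ≤ a + 2)]
    push_cast
    ring
  have hs : (-1 : ℤ)^(t+1+1) = (-1)^t := by
    rw [pow_succ, pow_succ]
    ring
  rw [hc, hs]
  push_cast
  ring

lemma half_vanish (N : ℕ) (f : ℕ → ℤ) (h0 : f N = 0)
    (hs : ∀ j < N, f (N + (j + 1)) = f (N - 1 - j))
    (hF : ∑ i ∈ Finset.range (2 * N + 1), f i = 0) :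
    ∑ i ∈ Finset.range N, f i = 0 := by
  rw [show 2 * N + 1 = N + (N + 1) by omega] at hF
  rw [Finset.range_eq_Ico, ← Finset.sum_Ico_consecutive f
    (by omega : 0 ≤ N) (by omega : N ≤ N + (N + 1))] at hF
  have h2 : ∑ i ∈ Finset.Ico N (N + (N + 1)), f i
      = ∑ j ∈ Finset.range (N + 1), f (N + j) := by
    rw [Finset.sum_Ico_eq_sum_range, show N + (N + 1) - N = N + 1 by omega]
  rw [h2, Finset.sum_range_succ' (fun j => f (N + j)) N] at hF
  have h0' : f (N + 0) = 0 := by simpa using h0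
  have hs' : ∀ j ∈ Finset.range N, f (N + (j + 1)) = f (N - 1 - j) :=
    fun j hj => hs j (Finset.mem_range.mp hj)
  rw [Finset.sum_congr rfl hs', Finset.sum_range_reflect, h0', add_zero,
    ← Finset.range_eq_Ico] at hF
  linarith

lemma step3 (a : ℕ) :
    (∑ i ∈ Finset.range (a+3),
        (-1 : ℤ)^i * (((2*a+6).choose i : ℕ) : ℤ) * (((a:ℤ)+3) - i)^(2*a+4)) = 0 := by
  have hF := alt_sum_vanish (2*a+4) (2*a+6) ((a:ℤ)+3) (by omega)
  have hsign : ∀ i ∈ Finset.range (2*a+6+1),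
      (-1 : ℤ)^(2*a+6-i) * (((2*a+6).choose i : ℕ) : ℤ) * (((a:ℤ)+3) - i)^(2*a+4)
      = (-1 : ℤ)^i * (((2*a+6).choose i : ℕ) : ℤ) * (((a:ℤ)+3) - i)^(2*a+4) := by
    intro i hi
    rw [Finset.mem_range] at hi
    have hle : i ≤ 2*a+6 := by omega
    have he : Even (2*a+6) := ⟨a+3, by ring⟩
    have hpar := Nat.even_sub hle
    rcases Nat.even_or_odd i with hei | hoi
    · rw [hei.neg_one_pow, Even.neg_one_pow (hpar.mpr (iff_of_true he hei))]
    · have hnot : ¬ Even (2*a+6-i) := by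
        intro hcon
        exact (Nat.not_even_iff_odd.mpr hoi) ((hpar.mp hcon).mp he)
      rw [hoi.neg_one_pow, Odd.neg_one_pow (Nat.not_even_iff_odd.mp hnot)]
  rw [Finset.sum_congr rfl hsign] at hF
  refine half_vanish (a+3)
    (fun i => (-1 : ℤ)^i * (((2*a+6).choose i : ℕ) : ℤ) * (((a:ℤ)+3) - i)^(2*a+4)) ?_ ?_ ?_
  · show (-1 : ℤ)^(a+3) * (((2*a+6).choose (a+3) : ℕ) : ℤ)
        * (((a:ℤ)+3) - ((a+3 : ℕ) : ℤ))^(2*a+4) = 0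
    have hb : ((a:ℤ)+3) - ((a+3 : ℕ) : ℤ) = 0 := by push_cast; ring
    rw [hb, zero_pow (by omega : 2*a+4 ≠ 0), mul_zero]
  · intro j hj
    show (-1 : ℤ)^((a+3) + (j+1)) * (((2*a+6).choose ((a+3) + (j+1)) : ℕ) : ℤ)
          * (((a:ℤ)+3) - (((a+3) + (j+1) : ℕ) : ℤ))^(2*a+4)
        = (-1 : ℤ)^((a+3)-1-j) * (((2*a+6).choose ((a+3)-1-j) : ℕ) : ℤ)
          * (((a:ℤ)+3) - (((a+3)-1-j : ℕ) : ℤ))^(2*a+4)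
    have hs : (-1 : ℤ)^((a+3) + (j+1)) = (-1 : ℤ)^((a+3)-1-j) := by
      rw [show (a+3) + (j+1) = ((a+3)-1-j) + 2*(j+1) by omega, pow_add, pow_mul]
      norm_num
    have hcc : (2*a+6).choose ((a+3) + (j+1)) = (2*a+6).choose ((a+3)-1-j) := by
      rw [show (a+3)-1-j = 2*a+6 - ((a+3)+(j+1)) by omega]
      exact (Nat.choose_symm (by omega)).symm
    have hv : (((a:ℤ)+3) - (((a+3) + (j+1) : ℕ) : ℤ))^(2*a+4)
        = (((a:ℤ)+3) - (((a+3)-1-j : ℕ) : ℤ))^(2*a+4) := by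
      have hb1 : ((a:ℤ)+3) - (((a+3) + (j+1) : ℕ) : ℤ) = -((j:ℤ)+1) := by
        push_cast
        ring
      have hb2 : ((a:ℤ)+3) - (((a+3)-1-j : ℕ) : ℤ) = (j:ℤ)+1 := by
        rw [show (a+3)-1-j = a+2-j by omega, Nat.cast_sub (by omega : j ≤ a+2)]
        push_cast
        ring
      rw [hb1, hb2]
      exact Even.neg_pow ⟨a+2, by ring⟩ _
    rw [hs, hcc, hv]
  · rw [show 2*(a+3)+1 = 2*a+6+1 by omega]
    exact hF

lemma eulerianZ_natCast (nn m : ℕ) : eulerianZ nn (m : ℤ) = eulerian nn m := by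
  rw [eulerianZ, if_neg (by omega), Int.toNat_natCast]

end SA

/-- For `k ≥ 2`,
`∑_{j=0}^{k-1} (-1)^(j+1) (k-j)^(2k-2) C(2k+1, j) = A(2k-2, k-2) - A(2k-2, k-3)`. -/
theorem stmt_11 (k : ℕ) (hk : 2 ≤ k) :
    ∑ j ∈ Finset.range k,
        (-1 : ℤ) ^ (j + 1) * ((k : ℤ) - j) ^ (2 * k - 2) * ((2 * k + 1).choose j) =
      eulerianZ (2 * k - 2) ((k : ℤ) - 2) - eulerianZ (2 * k - 2) ((k : ℤ) - 3) := by
  rcases eq_or_lt_of_le hk with hk2 | hk3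
  · subst hk2
    have h1 : ((2 : ℕ) : ℤ) - 2 = ((0 : ℕ) : ℤ) := by norm_num
    have h2 : ((2 : ℕ) : ℤ) - 3 = -1 := by norm_num
    rw [h1, h2, SA.eulerianZ_natCast]
    rw [show eulerianZ (2*2-2) (-1) = 0 from by rw [eulerianZ, if_pos (by norm_num)]]
    have h3 := (SA.eulerian_eq_B (2*2-2) 0).trans (SA.B_zero _)
    rw [show (2:ℕ)*2-2 = 2 by norm_num] at h3 ⊢
    rw [h3]
    norm_num [Finset.sum_range_succ]
  · obtain ⟨a, rfl⟩ : ∃ a, k = a + 3 := ⟨k - 3, by omega⟩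
    have hLHS : ∀ j ∈ Finset.range (a+3),
        (-1 : ℤ) ^ (j + 1) * (((a+3 : ℕ) : ℤ) - j) ^ (2 * (a+3) - 2) * (((2 * (a+3) + 1).choose j : ℕ) : ℤ)
        = (-1 : ℤ)^(j+1) * (((a:ℤ)+3) - j)^(2*a+4) * (((2*a+7).choose j : ℕ) : ℤ) := by
      intro j _
      rw [show 2 * (a+3) - 2 = 2*a+4 by omega, show 2 * (a+3) + 1 = 2*a+7 by omega]
      push_cast
      ring
    rw [Finset.sum_congr rfl hLHS]
    rw [show 2 * (a+3) - 2 = 2*a+4 by omega]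
    have e1 : ((a+3 : ℕ) : ℤ) - 2 = ((a+1 : ℕ) : ℤ) := by push_cast; ring
    have e2 : ((a+3 : ℕ) : ℤ) - 3 = ((a : ℕ) : ℤ) := by push_cast; ring
    rw [e1, e2, SA.eulerianZ_natCast, SA.eulerianZ_natCast,
      SA.eulerian_eq_B, SA.eulerian_eq_B, SA.step1 a]
    have h2 := SA.step2 a
    have h3 := SA.step3 a
    linarith
end

section
/- Let t > 2k+2 and c = (t-1)(k+1) - 1. Let G_i be the set of two-row Gelfand-Tsetlin patterns (nonnegative integer 2×(2k+2) matrices with λ_{2,2k+2}=0, λ_{1,j+1} ≥ λ_{2,j}, λ_{p,j} ≥ λ_{p,j+1}) satisfying λ_{2,1} = i and λ_{1,j} + λ_{2,j} = (2k+3-j)t for all j. Then |G_{c+1}| ≤ |G_c|. -/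
/-- The set of two-row Gelfand-Tsetlin patterns (0-indexed rows and columns):
nonnegative integer `2 × (2k+2)` matrices `L` with `L 1 (2k+1) = 0`,
`L 0 (j+1) ≥ L 1 j`, `L p j ≥ L p (j+1)`, subject to `L 1 0 = i` and the column-sum
conditions `L 0 j + L 1 j = (2k+2-j) t`. -/
def GTpat (k t i : ℕ) : Set (Fin 2 → Fin (2 * k + 2) → ℕ) :=
  {L | L 1 ⟨2 * k + 1, by omega⟩ = 0 ∧
       (∀ j : ℕ, ∀ h : j + 1 < 2 * k + 2, L 1 ⟨j, by omega⟩ ≤ L 0 ⟨j + 1, h⟩) ∧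
       (∀ p : Fin 2, ∀ j : ℕ, ∀ h : j + 1 < 2 * k + 2,
          L p ⟨j + 1, h⟩ ≤ L p ⟨j, by omega⟩) ∧
       L 1 ⟨0, by omega⟩ = i ∧
       (∀ j : ℕ, ∀ h : j < 2 * k + 2, L 0 ⟨j, h⟩ + L 1 ⟨j, h⟩ = (2 * k + 2 - j) * t)}

def shiftMap (c : ℕ) {n : ℕ} (L : Fin 2 → Fin n → ℕ) : Fin 2 → Fin n → ℕ :=
  fun p j => if j.val = 0 then (if p.val = 0 then L p j + 1 else c) else L p j

lemma shiftMap_zero_zero (c : ℕ) {n : ℕ} (L : Fin 2 → Fin n → ℕ) (h : 0 < n) :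
    shiftMap c L 0 ⟨0, h⟩ = L 0 ⟨0, h⟩ + 1 := by
  simp [shiftMap]

lemma shiftMap_one_zero (c : ℕ) {n : ℕ} (L : Fin 2 → Fin n → ℕ) (h : 0 < n) :
    shiftMap c L 1 ⟨0, h⟩ = c := by
  simp [shiftMap]

lemma shiftMap_pos (c : ℕ) {n : ℕ} (L : Fin 2 → Fin n → ℕ) (p : Fin 2)
    (j : ℕ) (h : j < n) (hj : j ≠ 0) : shiftMap c L p ⟨j, h⟩ = L p ⟨j, h⟩ := by
  simp [shiftMap, hj]

lemma gtpat_bounded (k t i : ℕ) (L : Fin 2 → Fin (2 * k + 2) → ℕ)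
    (hL : L ∈ GTpat k t i) (p : Fin 2) (j : Fin (2 * k + 2)) :
    L p j ≤ (2 * k + 2) * t := by
  obtain ⟨h0, h1, h2, h3, h4⟩ := hL
  have h : L 0 j + L 1 j = (2 * k + 2 - j.1) * t := h4 j.1 j.2
  have hle : (2 * k + 2 - j.1) * t ≤ (2 * k + 2) * t := Nat.mul_le_mul_right _ (by omega)
  have hp : p = 0 ∨ p = 1 := by omega
  rcases hp with rfl | rfl <;> omega

lemma gtpat_finite (k t i : ℕ) : (GTpat k t i).Finite := by
  have hsub : GTpat k t i ⊆ Set.univ.pi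
      (fun _ : Fin 2 => Set.univ.pi fun _ : Fin (2 * k + 2) => Set.Iic ((2 * k + 2) * t)) := by
    intro L hL
    simp only [Set.mem_pi, Set.mem_univ, forall_true_left, Set.mem_Iic]
    intro p j
    exact gtpat_bounded k t i L hL p j
  exact (Set.Finite.pi fun _ => Set.Finite.pi fun _ => Set.finite_Iic _).subset hsub

lemma gtpat_key (k t : ℕ) (ht : 2 * k + 2 < t) (c : ℕ)
    (hc : c = (t - 1) * (k + 1) - 1) (L : Fin 2 → Fin (2 * k + 2) → ℕ)
    (hL : L ∈ GTpat k t (c + 1)) (h1lt : (1 : ℕ) < 2 * k + 2) :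
    L 1 ⟨1, h1lt⟩ ≤ c := by
  obtain ⟨h0, h1, h2, h3, h4⟩ := hL
  have hc1 : c + 1 = (t - 1) * (k + 1) := by
    have : 1 * 1 ≤ (t - 1) * (k + 1) := Nat.mul_le_mul (by omega) (by omega)
    omega
  rcases Nat.eq_zero_or_pos k with rfl | hk
  · have : L 1 ⟨1, h1lt⟩ = 0 := h0
    omega
  · have h2lt : 2 < 2 * k + 2 := by omega
    set a := L 1 ⟨1, h1lt⟩ with ha
    set b := L 1 ⟨2, h2lt⟩ with hb
    have hint : a ≤ L 0 ⟨2, h2lt⟩ := h1 1 h2lt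
    have hs1 : L 0 ⟨1, h1lt⟩ + a = (2 * k + 2 - 1) * t := h4 1 h1lt
    have hs2 : L 0 ⟨2, h2lt⟩ + b = (2 * k + 2 - 2) * t := h4 2 h2lt
    have hmono : L 0 ⟨2, h2lt⟩ ≤ L 0 ⟨1, h1lt⟩ := h2 0 1 h2lt
    have e1 : (2 * k + 2 - 1) * t = (2 * k) * t + t := by
      have h' : 2 * k + 2 - 1 = 2 * k + 1 := by omega
      rw [h']; ring
    have e2 : (2 * k + 2 - 2) * t = (2 * k) * t := by
      have h' : 2 * k + 2 - 2 = 2 * k := by omega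
      rw [h']
    have e3 : 2 * ((t - 1) * (k + 1)) + 2 * (k + 1) = (2 * k) * t + t + t := by
      obtain ⟨s, rfl⟩ : ∃ s, t = s + 1 := ⟨t - 1, by omega⟩
      simp only [Nat.add_sub_cancel]
      ring
    omega

lemma gtpat_maps (k t : ℕ) (ht : 2 * k + 2 < t) (c : ℕ)
    (hc : c = (t - 1) * (k + 1) - 1) (L : Fin 2 → Fin (2 * k + 2) → ℕ)
    (hL : L ∈ GTpat k t (c + 1)) : shiftMap c L ∈ GTpat k t c := by
  have hkey := gtpat_key k t ht c hc L hL (by omega)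
  obtain ⟨h0, h1, h2, h3, h4⟩ := hL
  refine ⟨?_, ?_, ?_, ?_, ?_⟩
  · rw [shiftMap_pos c L 1 (2 * k + 1) (by omega) (by omega)]
    exact h0
  · intro j h
    rw [shiftMap_pos c L 0 (j + 1) h (by omega)]
    rcases Nat.eq_zero_or_pos j with rfl | hj
    · rw [shiftMap_one_zero]
      have := h1 0 h
      omega
    · rw [shiftMap_pos c L 1 j (by omega) (by omega)]
      exact h1 j h
  · intro p j h
    have hp : p = 0 ∨ p = 1 := by omega
    rcases Nat.eq_zero_or_pos j with rfl | hj
    · rcases hp with rfl | rfl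
      · rw [shiftMap_pos c L 0 (0 + 1) h (by omega), shiftMap_zero_zero]
        have := h2 0 0 h
        omega
      · rw [shiftMap_pos c L 1 (0 + 1) h (by omega), shiftMap_one_zero]
        exact hkey
    · rcases hp with rfl | rfl <;>
        rw [shiftMap_pos c L _ (j + 1) h (by omega),
            shiftMap_pos c L _ j (by omega) (by omega)]
      · exact h2 0 j h
      · exact h2 1 j h
  · rw [shiftMap_one_zero]
  · intro j h
    rcases Nat.eq_zero_or_pos j with rfl | hj
    · rw [shiftMap_zero_zero, shiftMap_one_zero]
      have := h4 0 h
      omega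
    · rw [shiftMap_pos c L 0 j h (by omega), shiftMap_pos c L 1 j h (by omega)]
      exact h4 j h

/-- For `t > 2k+2` and `c = (t-1)(k+1) - 1`, `|G_{c+1}| ≤ |G_c|`. -/
theorem stmt_14 (k t : ℕ) (ht : 2 * k + 2 < t) (c : ℕ)
    (hc : c = (t - 1) * (k + 1) - 1) :
    (GTpat k t (c + 1)).ncard ≤ (GTpat k t c).ncard := by
  refine Set.ncard_le_ncard_of_injOn (shiftMap c)
    (fun L hL => gtpat_maps k t ht c hc L hL) ?_ (gtpat_finite k t c)
  intro L hL M hM hLM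
  funext p j
  have hp : p = 0 ∨ p = 1 := by omega
  rcases Nat.eq_zero_or_pos j.val with hj | hj
  · have hj0 : j = ⟨0, by omega⟩ := by apply Fin.ext; simpa using hj
    rw [hj0]
    rcases hp with rfl | rfl
    · have := congrFun (congrFun hLM 0) ⟨0, by omega⟩
      rw [shiftMap_zero_zero, shiftMap_zero_zero] at this
      omega
    · rw [hL.2.2.2.1, hM.2.2.2.1]
  · have := congrFun (congrFun hLM p) j
    have hj' : j = ⟨j.val, j.2⟩ := rfl
    rw [hj'] at this ⊢
    rw [shiftMap_pos c L p j.val j.2 (by omega),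
        shiftMap_pos c M p j.val j.2 (by omega)] at this
    exact this
end
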